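/- Let θ > 0 and n ∈ (0,1). Then problem (P) has at most one solution: if H₁ and H₂ are both solutions of (P), then H₁ = H₂ on [0,1]. -/

import Mathlib

open Set Filter

/-- Problem (P): the similarity boundary-value problem for the thin-film equation. -/
def IsSolP (n θ : ℝ) (H : ℝ → ℝ) : Prop :=
  ContDiffOn ℝ 1 H (Set.Icc 0 1) ∧
  ContDiffOn ℝ 3 H (Set.Ioo 0 1) ∧
  (∀ x ∈ Set.Ioo (0:ℝ) 1, 0 < H x) ∧
  (∀ x ∈ Set.Ioo (0:ℝ) 1, H x ^ (n - 1) * deriv^[3] H x = -1 + x) ∧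
  H 0 = 0 ∧
  derivWithin H (Set.Icc 0 1) 0 = θ ∧
  derivWithin H (Set.Icc 0 1) 1 = 0

lemma sol_d3 {n θ : ℝ} {H : ℝ → ℝ} (h : IsSolP n θ H) :
    ∀ x ∈ Set.Ioo (0:ℝ) 1, deriv^[3] H x = (-1 + x) * H x ^ (1 - n) := by
  intro x hx
  have hp := h.2.2.1 x hx
  have he := h.2.2.2.1 x hx
  have h1 : H x ^ (1 - n) * H x ^ (n - 1) = 1 := by
    rw [← Real.rpow_add hp]; norm_num
  calc deriv^[3] H x = (H x ^ (1 - n) * H x ^ (n - 1)) * deriv^[3] H x := by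
        rw [h1, one_mul]
    _ = H x ^ (1 - n) * (H x ^ (n - 1) * deriv^[3] H x) := by ring
    _ = (-1 + x) * H x ^ (1 - n) := by rw [he]; ring

lemma sol_diffs {H : ℝ → ℝ} (h : ContDiffOn ℝ 3 H (Set.Ioo (0:ℝ) 1)) :
    (∀ x ∈ Set.Ioo (0:ℝ) 1, DifferentiableAt ℝ H x) ∧
    (∀ x ∈ Set.Ioo (0:ℝ) 1, DifferentiableAt ℝ (deriv H) x) ∧
    (∀ x ∈ Set.Ioo (0:ℝ) 1, DifferentiableAt ℝ (deriv (deriv H)) x) := by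
  have h1 : ContDiffOn ℝ 2 (deriv H) (Set.Ioo (0:ℝ) 1) :=
    h.deriv_of_isOpen isOpen_Ioo (by norm_num)
  have h2 : ContDiffOn ℝ 1 (deriv (deriv H)) (Set.Ioo (0:ℝ) 1) :=
    h1.deriv_of_isOpen isOpen_Ioo (by norm_num)
  refine ⟨fun x hx => ?_, fun x hx => ?_, fun x hx => ?_⟩
  · exact (h.differentiableOn (by norm_num)).differentiableAt (isOpen_Ioo.mem_nhds hx)
  · exact (h1.differentiableOn (by norm_num)).differentiableAt (isOpen_Ioo.mem_nhds hx)
  · exact (h2.differentiableOn (by norm_num)).differentiableAt (isOpen_Ioo.mem_nhds hx)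

lemma thinfilm_key (n θ : ℝ) (hn0 : 0 < n) (hn1 : n < 1) (hθ : 0 < θ)
    (H₁ H₂ : ℝ → ℝ) (h1 : IsSolP n θ H₁) (h2 : IsSolP n θ H₂)
    (t : ℝ) (ht0 : 0 ≤ t) (ht1 : t ≤ 1)
    (hle : ∀ x ∈ Set.Ioo (0:ℝ) 1, t * H₁ x ≤ H₂ x) :
    ∀ x ∈ Set.Icc (0:ℝ) 1, (1 - t) * θ * (x - x^2/2) ≤ H₂ x - t * H₁ x := by
  obtain ⟨hd1a, hd1b, hd1c⟩ := sol_diffs h1.2.1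
  obtain ⟨hd2a, hd2b, hd2c⟩ := sol_diffs h2.2.1
  have hD31 := sol_d3 h1
  have hD32 := sol_d3 h2
  set f₁ := derivWithin H₁ (Set.Icc (0:ℝ) 1) with hf₁def
  set f₂ := derivWithin H₂ (Set.Icc (0:ℝ) 1) with hf₂def
  have hf1eq : ∀ x ∈ Set.Ioo (0:ℝ) 1, f₁ x = deriv H₁ x := fun x hx =>
    derivWithin_of_mem_nhds (Icc_mem_nhds hx.1 hx.2)
  have hf2eq : ∀ x ∈ Set.Ioo (0:ℝ) 1, f₂ x = deriv H₂ x := fun x hx =>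
    derivWithin_of_mem_nhds (Icc_mem_nhds hx.1 hx.2)
  set F : ℝ → ℝ := fun x => f₂ x - t * f₁ x with hFdef
  set G1 : ℝ → ℝ := fun y => deriv H₂ y - t * deriv H₁ y with hG1def
  set G2 : ℝ → ℝ := fun y => deriv (deriv H₂) y - t * deriv (deriv H₁) y with hG2def
  have hFev : ∀ x ∈ Set.Ioo (0:ℝ) 1, F =ᶠ[nhds x] G1 := by
    intro x hx
    filter_upwards [isOpen_Ioo.mem_nhds hx] with y hy
    simp only [hFdef, hG1def, hf1eq y hy, hf2eq y hy]
  have hG1diff : ∀ x ∈ Set.Ioo (0:ℝ) 1, DifferentiableAt ℝ G1 x := fun x hx =>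
    (hd2b x hx).sub ((hd1b x hx).const_mul t)
  have hG2diff : ∀ x ∈ Set.Ioo (0:ℝ) 1, DifferentiableAt ℝ G2 x := fun x hx =>
    (hd2c x hx).sub ((hd1c x hx).const_mul t)
  have hderivF : ∀ x ∈ Set.Ioo (0:ℝ) 1, deriv F x = G2 x := by
    intro x hx
    rw [(hFev x hx).deriv_eq, hG1def]
    rw [deriv_fun_sub (hd2b x hx) ((hd1b x hx).const_mul t), deriv_const_mul t (hd1b x hx)]
  have hFdiff : ∀ x ∈ Set.Ioo (0:ℝ) 1, DifferentiableAt ℝ F x := fun x hx =>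
    (hFev x hx).differentiableAt_iff.mpr (hG1diff x hx)
  have hF'ev : ∀ x ∈ Set.Ioo (0:ℝ) 1, deriv F =ᶠ[nhds x] G2 := by
    intro x hx
    filter_upwards [isOpen_Ioo.mem_nhds hx] with y hy
    exact hderivF y hy
  have hF'diff : ∀ x ∈ Set.Ioo (0:ℝ) 1, DifferentiableAt ℝ (deriv F) x := fun x hx =>
    (hF'ev x hx).differentiableAt_iff.mpr (hG2diff x hx)
  have hderiv2F : ∀ x ∈ Set.Ioo (0:ℝ) 1,
      deriv (deriv F) x = deriv^[3] H₂ x - t * deriv^[3] H₁ x := by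
    intro x hx
    rw [(hF'ev x hx).deriv_eq, hG2def]
    rw [deriv_fun_sub (hd2c x hx) ((hd1c x hx).const_mul t), deriv_const_mul t (hd1c x hx)]
    rfl
  -- sign of second derivative of F
  have hsign : ∀ x ∈ Set.Ioo (0:ℝ) 1, deriv^[2] F x ≤ 0 := by
    intro x hx
    have key : t * H₁ x ^ (1 - n) ≤ H₂ x ^ (1 - n) := by
      have h1p := h1.2.2.1 x hx
      have h2p := h2.2.2.1 x hx
      rcases eq_or_lt_of_le ht0 with h | h
      · rw [← h, zero_mul]; positivity
      · have e1 : t ≤ t ^ (1 - n) := by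
          have := Real.rpow_le_rpow_of_exponent_ge h ht1 (by linarith : 1 - n ≤ 1)
          rwa [Real.rpow_one] at this
        have e2 : t ^ (1-n) * H₁ x ^ (1-n) = (t * H₁ x) ^ (1-n) :=
          (Real.mul_rpow (le_of_lt h) (le_of_lt h1p)).symm
        have e3 : (t * H₁ x) ^ (1-n) ≤ H₂ x ^ (1-n) :=
          Real.rpow_le_rpow (by positivity) (hle x hx) (by linarith)
        nlinarith [Real.rpow_nonneg (le_of_lt h1p) (1-n)]
    have : deriv^[2] F x = (-1 + x) * (H₂ x ^ (1-n) - t * H₁ x ^ (1-n)) := by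
      show deriv (deriv F) x = _
      rw [hderiv2F x hx, hD32 x hx, hD31 x hx]; ring
    rw [this]
    have hx1 : -1 + x ≤ 0 := by linarith [hx.2]
    nlinarith
  have hFcont : ContinuousOn F (Set.Icc (0:ℝ) 1) := by
    have c1 : ContinuousOn f₁ (Set.Icc (0:ℝ) 1) :=
      h1.1.continuousOn_derivWithin (uniqueDiffOn_Icc zero_lt_one) le_rfl
    have c2 : ContinuousOn f₂ (Set.Icc (0:ℝ) 1) :=
      h2.1.continuousOn_derivWithin (uniqueDiffOn_Icc zero_lt_one) le_rfl
    exact c2.sub (continuousOn_const.mul c1)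
  have hconc : ConcaveOn ℝ (Set.Icc (0:ℝ) 1) F := by
    refine concaveOn_of_deriv2_nonpos (convex_Icc 0 1) hFcont ?_ ?_ ?_
    · rw [interior_Icc]; exact fun x hx => (hFdiff x hx).differentiableWithinAt
    · rw [interior_Icc]; exact fun x hx => (hF'diff x hx).differentiableWithinAt
    · rw [interior_Icc]; exact hsign
  have hF0 : F 0 = (1 - t) * θ := by
    simp only [hFdef, hf₁def, hf₂def, h1.2.2.2.2.2.1, h2.2.2.2.2.2.1]; ring
  have hF1 : F 1 = 0 := by
    simp only [hFdef, hf₁def, hf₂def, h1.2.2.2.2.2.2, h2.2.2.2.2.2.2]; ring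
  have hchord : ∀ x ∈ Set.Icc (0:ℝ) 1, (1 - x) * ((1 - t) * θ) ≤ F x := by
    intro x hx
    have h01 : (0:ℝ) ∈ Set.Icc (0:ℝ) 1 := ⟨le_refl 0, zero_le_one⟩
    have h11 : (1:ℝ) ∈ Set.Icc (0:ℝ) 1 := ⟨zero_le_one, le_refl 1⟩
    have := hconc.2 h01 h11 (by linarith [hx.2] : (0:ℝ) ≤ 1 - x) hx.1 (by ring)
    simp only [smul_eq_mul, mul_zero, mul_one, zero_add, hF0, hF1] at this
    linarith
  -- now integrate
  set c := (1 - t) * θ with hcdef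
  have hc0 : 0 ≤ c := by
    have : 0 ≤ 1 - t := by linarith
    positivity
  set G : ℝ → ℝ := fun x => H₂ x - t * H₁ x - c * (x - x^2/2) with hGdef
  have hG' : ∀ x ∈ Set.Ioo (0:ℝ) 1, HasDerivAt G (F x - c * (1 - x)) x := by
    intro x hx
    have hH1 : HasDerivAt H₁ (f₁ x) x := by
      rw [hf1eq x hx]; exact (hd1a x hx).hasDerivAt
    have hH2 : HasDerivAt H₂ (f₂ x) x := by
      rw [hf2eq x hx]; exact (hd2a x hx).hasDerivAt
    have hpoly : HasDerivAt (fun y : ℝ => c * (y - y^2/2)) (c * (1 - x)) x := by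
      have h := (((hasDerivAt_id x).fun_sub ((hasDerivAt_pow 2 x).div_const 2))).const_mul c
      refine h.congr_deriv ?_
      push_cast; ring
    exact (hH2.sub (hH1.const_mul t)).sub hpoly
  have hGcont : ContinuousOn G (Set.Icc (0:ℝ) 1) := by
    refine ((h2.1.continuousOn).sub (continuousOn_const.mul h1.1.continuousOn)).sub ?_
    exact (continuousOn_const.mul (by fun_prop))
  have hmono : MonotoneOn G (Set.Icc (0:ℝ) 1) := by
    refine monotoneOn_of_deriv_nonneg (convex_Icc 0 1) hGcont ?_ ?_
    · rw [interior_Icc]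
      exact fun x hx => (hG' x hx).differentiableAt.differentiableWithinAt
    · rw [interior_Icc]
      intro x hx
      rw [(hG' x hx).deriv]
      have := hchord x (Set.mem_Icc_of_Ioo hx)
      linarith
  intro x hx
  have h0m : (0:ℝ) ∈ Set.Icc (0:ℝ) 1 := ⟨le_refl 0, zero_le_one⟩
  have := hmono h0m hx hx.1
  have hG0 : G 0 = 0 := by
    simp only [hGdef, h1.2.2.2.2.1, h2.2.2.2.2.1]; norm_num
  rw [hG0] at this
  simp only [hGdef] at this
  linarith

lemma thinfilm_le (n θ : ℝ) (hn0 : 0 < n) (hn1 : n < 1) (hθ : 0 < θ)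
    (H₁ H₂ : ℝ → ℝ) (h1 : IsSolP n θ H₁) (h2 : IsSolP n θ H₂) :
    ∀ x ∈ Set.Icc (0:ℝ) 1, H₁ x ≤ H₂ x := by
  have key := thinfilm_key n θ hn0 hn1 hθ H₁ H₂ h1 h2
  have key' : ∀ x ∈ Set.Icc (0:ℝ) 1, θ * (x - x^2/2) ≤ H₁ x := by
    intro x hx
    have h := thinfilm_key n θ hn0 hn1 hθ H₂ H₁ h2 h1 0 le_rfl zero_le_one
      (fun y hy => by simpa using (h1.2.2.1 y hy).le) x hx
    simpa using h
  have h1pos := h1.2.2.1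
  have h2pos := h2.2.2.1
  have hf1cont : ContinuousOn (derivWithin H₁ (Set.Icc 0 1)) (Set.Icc (0:ℝ) 1) :=
    h1.1.continuousOn_derivWithin (uniqueDiffOn_Icc zero_lt_one) le_rfl
  have hf1d : ∀ x ∈ Set.Ioo (0:ℝ) 1, HasDerivAt H₁ (derivWithin H₁ (Set.Icc 0 1) x) x := by
    intro x hx
    rw [derivWithin_of_mem_nhds (Icc_mem_nhds hx.1 hx.2)]
    exact ((sol_diffs h1.2.1).1 x hx).hasDerivAt
  have h10 : H₁ 0 = 0 := h1.2.2.2.2.1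
  have h1d0 : derivWithin H₁ (Set.Icc 0 1) 0 = θ := h1.2.2.2.2.2.1
  have hH1cont : ContinuousOn H₁ (Set.Icc (0:ℝ) 1) := h1.1.continuousOn
  have hxq : ∀ x : ℝ, x ∈ Set.Icc (0:ℝ) 1 → 0 ≤ x - x^2/2 := by
    intro x hx; nlinarith [hx.1, hx.2]
  -- nonnegativity of H₁, H₂ on Icc
  have hH1nn : ∀ x ∈ Set.Icc (0:ℝ) 1, 0 ≤ H₁ x := by
    intro x hx
    have := key' x hx
    nlinarith [hxq x hx]
  have hH2nn : ∀ x ∈ Set.Icc (0:ℝ) 1, 0 ≤ H₂ x := by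
    intro x hx
    have h := key 0 le_rfl zero_le_one
      (fun y hy => by simpa using (h2pos y hy).le) x hx
    nlinarith [hxq x hx]
  -- linear upper bound for H₁
  obtain ⟨C, hC⟩ := isCompact_Icc.exists_bound_of_continuousOn hf1cont
  have hCθ : θ ≤ C := by
    have := hC 0 ⟨le_refl 0, zero_le_one⟩
    rw [h1d0] at this
    calc θ ≤ |θ| := le_abs_self θ
      _ ≤ C := this
  have hCpos : 0 < C := lt_of_lt_of_le hθ hCθ
  have hlin : ∀ x ∈ Set.Icc (0:ℝ) 1, H₁ x ≤ C * x := by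
    have hmono : MonotoneOn (fun x => C * x - H₁ x) (Set.Icc (0:ℝ) 1) := by
      have hd : ∀ x ∈ Set.Ioo (0:ℝ) 1, HasDerivAt (fun y : ℝ => C * y - H₁ y)
          (C * 1 - derivWithin H₁ (Set.Icc 0 1) x) x := fun x hx =>
        ((hasDerivAt_id x).const_mul C).sub (hf1d x hx)
      refine monotoneOn_of_deriv_nonneg (convex_Icc 0 1)
        (((continuous_const.mul continuous_id).continuousOn).sub hH1cont) ?_ ?_
      · rw [interior_Icc]
        intro x hx
        exact (hd x hx).differentiableAt.differentiableWithinAt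
      · rw [interior_Icc]
        intro x hx
        rw [(hd x hx).deriv]
        have h := hC x (Set.mem_Icc_of_Ioo hx)
        have : derivWithin H₁ (Set.Icc 0 1) x ≤ C := (le_abs_self _).trans h
        linarith
    intro x hx
    have := hmono ⟨le_refl 0, zero_le_one⟩ hx hx.1
    simp only [mul_zero, h10, sub_zero] at this
    linarith
  -- the sweeping set
  set S : Set ℝ := {t | t ∈ Set.Icc (0:ℝ) 1 ∧ ∀ x ∈ Set.Icc (0:ℝ) 1, t * H₁ x ≤ H₂ x} with hSdef
  have h0S : (0:ℝ) ∈ S := ⟨⟨le_refl 0, zero_le_one⟩, fun x hx => by simpa using hH2nn x hx⟩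
  have hbdd : BddAbove S := ⟨1, fun t ht => ht.1.2⟩
  have hne : S.Nonempty := ⟨0, h0S⟩
  set T := sSup S with hTdef
  have hT0 : 0 ≤ T := le_csSup hbdd h0S
  have hT1 : T ≤ 1 := csSup_le hne fun t ht => ht.1.2
  have hTS : ∀ x ∈ Set.Icc (0:ℝ) 1, T * H₁ x ≤ H₂ x := by
    intro x hx
    by_contra hcon
    push_neg at hcon
    have hH1x : 0 < H₁ x := by
      rcases lt_or_eq_of_le (hH1nn x hx) with h | h
      · exact h
      · exfalso; rw [← h, mul_zero] at hcon; exact absurd (hH2nn x hx) (not_le.mpr hcon)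
    have hlt : H₂ x / H₁ x < T := by
      rw [div_lt_iff₀ hH1x]; linarith [hcon]
    obtain ⟨u, huS, hu⟩ := exists_lt_of_lt_csSup hne hlt
    have h2 := huS.2 x hx
    have h3 : H₂ x < u * H₁ x := (div_lt_iff₀ hH1x).mp hu
    linarith
  -- T = 1
  have hT : T = 1 := by
    by_contra hne1
    have hTlt : T < 1 := lt_of_le_of_ne hT1 hne1
    set ε := min (1 - T) ((1 - T) * θ / (2 * C)) with hεdef
    have hεpos : 0 < ε := by
      apply lt_min (by linarith)
      apply div_pos (by nlinarith) (by linarith)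
    have hTεS : T + ε ∈ S := by
      constructor
      · constructor
        · linarith
        · have : ε ≤ 1 - T := min_le_left _ _
          linarith
      · intro x hx
        have hkey := key T hT0 hT1 (fun y hy => hTS y (Set.mem_Icc_of_Ioo hy)) x hx
        have hεC : ε * C ≤ (1 - T) * θ / 2 := by
          have h := min_le_right (1 - T) ((1 - T) * θ / (2 * C))
          calc ε * C ≤ ((1 - T) * θ / (2 * C)) * C := by
                apply mul_le_mul_of_nonneg_right _ hCpos.le
                exact h
            _ = (1 - T) * θ / 2 := by field_simp
        have hxhalf : x / 2 ≤ x - x^2/2 := by nlinarith [hx.1, hx.2]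
        have hH1lin := hlin x hx
        have hεH1 : ε * H₁ x ≤ (1 - T) * θ * (x - x^2/2) := by
          calc ε * H₁ x ≤ ε * (C * x) := by
                apply mul_le_mul_of_nonneg_left hH1lin hεpos.le
            _ = (ε * C) * x := by ring
            _ ≤ ((1 - T) * θ / 2) * x := by
                apply mul_le_mul_of_nonneg_right hεC hx.1
            _ = ((1 - T) * θ) * (x / 2) := by ring
            _ ≤ (1 - T) * θ * (x - x^2/2) := by
                apply mul_le_mul_of_nonneg_left hxhalf
                nlinarith
        nlinarith
    have := le_csSup hbdd hTεS
    linarith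
  intro x hx
  have := hTS x hx
  rw [hT, one_mul] at this
  exact this

/-- Uniqueness for nonzero dynamic contact angles, `n ∈ (0,1)`: problem (P) has at most
one solution. -/
theorem thinfilm_uniqueness_n_lt_one (n θ : ℝ) (hn0 : 0 < n) (hn1 : n < 1) (hθ : 0 < θ) :
    ∀ H₁ H₂ : ℝ → ℝ, IsSolP n θ H₁ → IsSolP n θ H₂ →
      Set.EqOn H₁ H₂ (Set.Icc 0 1) := by
  intro H₁ H₂ h1 h2 x hx
  exact le_antisymm (thinfilm_le n θ hn0 hn1 hθ H₁ H₂ h1 h2 x hx)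
    (thinfilm_le n θ hn0 hn1 hθ H₂ H₁ h2 h1 x hx)
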